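/- Let C, α, ε > 0 and s ∈ ℕ. For every integer m > m(C,α,ε,s) and every nonzero one-variable polynomial f of degree at most s with non-negative real coefficients, the series Σ_{n=1}^∞ e^{4α(n+1)ε} (cosh 2nε)^{−m} f(tanh 2(n+1)ε) converges and C · Σ_{n=1}^∞ e^{4α(n+1)ε} (cosh 2nε)^{−m} f(tanh 2(n+1)ε) < (cosh ε)^{−m} f(tanh ε). -/

import Mathlib

open Real

noncomputable section

abbrev SL2 := Matrix.SpecialLinearGroup (Fin 2) ℝ

/-- inverse hyperbolic cosine -/
def acosh (x : ℝ) : ℝ := Real.log (x + Real.sqrt (x ^ 2 - 1))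

/-- the "pseudo-distance from the origin" ‖g‖ = arcosh((g₁₁²+g₁₂²+g₂₁²+g₂₂²)/2) -/
def gnorm (g : SL2) : ℝ :=
  acosh ((g.1 0 0 ^ 2 + g.1 0 1 ^ 2 + g.1 1 0 ^ 2 + g.1 1 1 ^ 2) / 2)

def z1 (x : SL2) : ℂ :=
  (((x.1 0 0 + x.1 1 1 : ℝ) : ℂ) + Complex.I * ((x.1 1 0 - x.1 0 1 : ℝ) : ℂ)) / 2

def z2 (x : SL2) : ℂ :=
  (((x.1 0 1 + x.1 1 0 : ℝ) : ℂ) + Complex.I * ((x.1 0 0 - x.1 1 1 : ℝ) : ℂ)) / 2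

/-- the spherical function ψ_{m,k}(x) = z₁(x)^{-(k+2m)} z₂(x)^k -/
def psi (m k : ℕ) (x : SL2) : ℂ := z1 x ^ (-(k + 2 * m : ℤ)) * z2 x ^ k

/-- γ is central iff both components are ±1 -/
def IsCentral (γ : SL2 × SL2) : Prop :=
  (γ.1.1 = 1 ∨ γ.1.1 = -1) ∧ (γ.2.1 = 1 ∨ γ.2.1 = -1)

/-- ε_Γ -/
def epsGamma (Γ : Set (SL2 × SL2)) : ℝ :=
  (1 / 3) * sInf {r | ∃ γ ∈ Γ, ¬IsCentral γ ∧ r = |gnorm γ.1 - gnorm γ.2|}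

/-- the set counted by N_Γ(x,R) -/
def orbitSet (Γ : Set (SL2 × SL2)) (x : SL2) (R : ℝ) : Set (SL2 × SL2) :=
  {γ | γ ∈ Γ ∧ gnorm (γ.1 * x * γ.2⁻¹) ≤ R}

/-- the constant m(C,α,ε,s) -/
def mConst (C α ε : ℝ) (s : ℕ) : ℝ :=
  (Real.log 2 * s + 2 * α * ε + Real.log (1 + 2 ^ s * C * Real.exp (6 * α * ε))) /
    Real.log (Real.cosh ε)

def chi (x : ℝ) : ℝ := if x = 1 then 0 else 1

/-- θ_{a,N} for a tuple a of length k (with the convention a_{-1} = 1) -/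
def thetaAN (a : ℕ → ℝ) (k : ℕ) (N : ℝ) : ℝ :=
  Real.pi * ∑ i ∈ Finset.range k,
    (chi (a i) - if i = 0 then 0 else chi (a (i - 1))) * N ^ (-(i : ℤ))

/-- the sign tuple a(b) attached to b -/
def signOf (b : ℕ → ℝ) (j : ℕ) : ℝ := if 0 ≤ b j then 1 else -1

/-- ψ_{m,b} = Σ_{j<k} b_j ψ_{m,3^j} -/
def psiB (m k : ℕ) (b : ℕ → ℝ) (x : SL2) : ℂ :=
  ∑ j ∈ Finset.range k, (b j : ℂ) * psi m (3 ^ j) x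

/-- f_b(u) = Σ_{j<k} b_j cos(3^j θ_{a(b),3}) u^{3^j} -/
def fb (k : ℕ) (b : ℕ → ℝ) (u : ℝ) : ℝ :=
  ∑ j ∈ Finset.range k, b j * Real.cos (3 ^ j * thetaAN (signOf b) k 3) * u ^ 3 ^ j

/-- the rotation matrix k(θ) -/
def kMat (θ : ℝ) : SL2 :=
  ⟨!![Real.cos θ, -Real.sin θ; Real.sin θ, Real.cos θ], by
    simp [Matrix.det_fin_two_of]
    nlinarith [Real.sin_sq_add_cos_sq θ]⟩

/-- the diagonal matrix a(t) -/
def aMat (t : ℝ) : SL2 :=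
  ⟨!![Real.exp t, 0; 0, Real.exp (-t)], by
    simp [Matrix.det_fin_two_of, ← Real.exp_add]⟩

end
lemma my_tanh_add_le {a b : ℝ} (ha : 0 ≤ a) (hb : 0 ≤ b) :
    Real.tanh (a + b) ≤ Real.tanh a + Real.tanh b := by
  have hca := Real.cosh_pos (x := a)
  have hcb := Real.cosh_pos (x := b)
  have hsa : 0 ≤ Real.sinh a := Real.sinh_nonneg_iff.mpr ha
  have hsb : 0 ≤ Real.sinh b := Real.sinh_nonneg_iff.mpr hb
  rw [Real.tanh_eq_sinh_div_cosh, Real.tanh_eq_sinh_div_cosh, Real.tanh_eq_sinh_div_cosh,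
    Real.sinh_add, Real.cosh_add]
  have h1 : Real.sinh a / Real.cosh a + Real.sinh b / Real.cosh b
      = (Real.sinh a * Real.cosh b + Real.cosh a * Real.sinh b) /
        (Real.cosh a * Real.cosh b) := by field_simp
  rw [h1]
  apply div_le_div_of_nonneg_left (by positivity) (by positivity) (by nlinarith)

lemma my_tanh_nat_mul {t : ℝ} (ht : 0 ≤ t) (k : ℕ) :
    Real.tanh (k * t) ≤ k * Real.tanh t := by
  induction k with
  | zero => simp
  | succ k ih =>
    have h1 : ((k + 1 : ℕ) : ℝ) * t = (k : ℝ) * t + t := by push_cast; ring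
    rw [h1]
    calc Real.tanh ((k : ℝ) * t + t) ≤ Real.tanh ((k : ℝ) * t) + Real.tanh t :=
          my_tanh_add_le (by positivity) ht
      _ ≤ (k : ℝ) * Real.tanh t + Real.tanh t := by linarith
      _ = ((k + 1 : ℕ) : ℝ) * Real.tanh t := by push_cast; ring

lemma my_cosh_pow_le {t : ℝ} (ht : 0 ≤ t) (k : ℕ) :
    Real.cosh t ^ k ≤ Real.cosh ((k : ℝ) * t) := by
  induction k with
  | zero => simp
  | succ k ih =>
    have h1 : ((k + 1 : ℕ) : ℝ) * t = (k : ℝ) * t + t := by push_cast; ring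
    rw [h1, Real.cosh_add, pow_succ]
    have hs : 0 ≤ Real.sinh ((k : ℝ) * t) * Real.sinh t :=
      mul_nonneg (Real.sinh_nonneg_iff.mpr (by positivity)) (Real.sinh_nonneg_iff.mpr ht)
    nlinarith [Real.cosh_pos (x := t), Real.cosh_pos (x := ((k : ℝ) * t))]

lemma my_eval_le {f : Polynomial ℝ} (hcoeff : ∀ i, 0 ≤ f.coeff i) {s : ℕ}
    (hdeg : f.natDegree ≤ s) {u K v : ℝ} (hK : 1 ≤ K) (hv : 0 ≤ v) (hu0 : 0 ≤ u)
    (hu : u ≤ K * v) : f.eval u ≤ K ^ s * f.eval v := by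
  rw [Polynomial.eval_eq_sum_range, Polynomial.eval_eq_sum_range, Finset.mul_sum]
  apply Finset.sum_le_sum
  intro i hi
  have hi' : i ≤ s := le_trans (Nat.lt_succ_iff.mp (Finset.mem_range.mp hi)) hdeg
  have h1 : u ^ i ≤ (K * v) ^ i := pow_le_pow_left₀ hu0 hu i
  have h3 : K ^ i ≤ K ^ s := pow_le_pow_right₀ hK hi'
  have h4 : f.coeff i * u ^ i ≤ f.coeff i * (K ^ i * v ^ i) := by
    rw [← mul_pow]; exact mul_le_mul_of_nonneg_left h1 (hcoeff i)
  have h5 : f.coeff i * (K ^ i * v ^ i) ≤ K ^ s * (f.coeff i * v ^ i) := by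
    have := mul_le_mul_of_nonneg_left h3 (mul_nonneg (hcoeff i) (pow_nonneg hv i))
    nlinarith [this]
  linarith


lemma my_core {C t E M : ℝ} (hC : 0 < C) (ht1 : 1 ≤ t) (hE1 : 1 < E) (hM0 : 0 < M)
    (key : t * E * (1 + t * C * E ^ 3) < M) :
    t * E ^ 2 * M⁻¹ ^ 2 < 1 ∧
      C * (t * t * E ^ 4 * M⁻¹ ^ 2) / (1 - t * E ^ 2 * M⁻¹ ^ 2) < M⁻¹ := by
  have hE0 : (0 : ℝ) < E := by linarith
  have ht0 : (0 : ℝ) < t := by linarith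
  have hr0 : (0 : ℝ) < M⁻¹ := by positivity
  have hrM : M⁻¹ * M = 1 := inv_mul_cancel₀ (ne_of_gt hM0)
  have hX0 : (0 : ℝ) < t * C * E ^ 3 := by positivity
  have hMgt : t * E < M := by nlinarith [mul_pos (mul_pos ht0 hE0) hX0]
  have hME : E < M := by nlinarith
  have hq_lt1 : t * E ^ 2 * M⁻¹ ^ 2 < 1 := by
    have h3 : t * E ^ 2 < M ^ 2 := by nlinarith
    have h4 : t * E ^ 2 * M⁻¹ ^ 2 < M ^ 2 * M⁻¹ ^ 2 :=
      mul_lt_mul_of_pos_right h3 (by positivity)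
    have h5 : M ^ 2 * M⁻¹ ^ 2 = (M⁻¹ * M) ^ 2 := by ring
    rw [h5, hrM] at h4; simpa using h4
  refine ⟨hq_lt1, ?_⟩
  rw [div_lt_iff₀ (by linarith : (0 : ℝ) < 1 - t * E ^ 2 * M⁻¹ ^ 2)]
  have h1 := mul_lt_mul_of_pos_right key hM0
  have h2 := mul_lt_mul_of_pos_left hME (mul_pos ht0 hE0)
  have hc2 : C * (t * t) * E ^ 4 * M + t * E ^ 2 < M ^ 2 := by nlinarith [h1, h2]
  have h5 : (C * (t * t) * E ^ 4 * M + t * E ^ 2) * M⁻¹ ^ 3 < M ^ 2 * M⁻¹ ^ 3 :=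
    mul_lt_mul_of_pos_right hc2 (by positivity)
  have e1 : (C * (t * t) * E ^ 4 * M + t * E ^ 2) * M⁻¹ ^ 3
      = C * (t * t) * E ^ 4 * (M⁻¹ * M) * M⁻¹ ^ 2 + t * E ^ 2 * M⁻¹ ^ 3 := by ring
  have e2 : M ^ 2 * M⁻¹ ^ 3 = (M⁻¹ * M) ^ 2 * M⁻¹ := by ring
  rw [e1, e2, hrM] at h5
  linarith [h5]

theorem stmt4 (C α ε : ℝ) (hC : 0 < C) (hα : 0 < α) (hε : 0 < ε) (s : ℕ)
    (m : ℕ) (hm : mConst C α ε s < m)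
    (f : Polynomial ℝ) (hf : f ≠ 0) (hdeg : f.natDegree ≤ s) (hcoeff : ∀ i, 0 ≤ f.coeff i) :
    Summable (fun n : ℕ =>
      Real.exp (4 * α * ((n : ℝ) + 2) * ε) * Real.cosh (2 * ((n : ℝ) + 1) * ε) ^ (-(m : ℤ)) *
        f.eval (Real.tanh (2 * ((n : ℝ) + 2) * ε))) ∧
    C * ∑' n : ℕ,
        Real.exp (4 * α * ((n : ℝ) + 2) * ε) * Real.cosh (2 * ((n : ℝ) + 1) * ε) ^ (-(m : ℤ)) *
          f.eval (Real.tanh (2 * ((n : ℝ) + 2) * ε)) <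
      Real.cosh ε ^ (-(m : ℤ)) * f.eval (Real.tanh ε) := by
  simp only [zpow_neg, zpow_natCast]
  -- basic positivity facts
  have hc1 : 1 < Real.cosh ε := Real.one_lt_cosh.mpr (ne_of_gt hε)
  have hc0 : (0 : ℝ) < Real.cosh ε := by linarith
  have hL : 0 < Real.log (Real.cosh ε) := Real.log_pos hc1
  have htanh : 0 < Real.tanh ε := by
    rw [Real.tanh_eq_sinh_div_cosh]
    exact div_pos (Real.sinh_pos_iff.mpr hε) (Real.cosh_pos ε)
  set F := f.eval (Real.tanh ε) with hFdef
  have hF : 0 < F := by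
    rw [hFdef, Polynomial.eval_eq_sum_range]
    apply Finset.sum_pos'
    · intro i _; exact mul_nonneg (hcoeff i) (pow_nonneg htanh.le i)
    · refine ⟨f.natDegree, Finset.mem_range.mpr (Nat.lt_succ_self _), ?_⟩
      have hlc : f.coeff f.natDegree ≠ 0 := Polynomial.leadingCoeff_ne_zero.mpr hf
      exact mul_pos (lt_of_le_of_ne (hcoeff _) (Ne.symm hlc)) (pow_pos htanh _)
  have hevalnn : ∀ u : ℝ, 0 ≤ u → 0 ≤ f.eval u := by
    intro u hu
    rw [Polynomial.eval_eq_sum_range]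
    exact Finset.sum_nonneg fun i _ => mul_nonneg (hcoeff i) (pow_nonneg hu i)
  -- the exponential E
  set E := Real.exp (2 * α * ε) with hEdef
  have hE0 : 0 < E := Real.exp_pos _
  have hE1 : 1 < E := by
    rw [hEdef, show (1 : ℝ) = Real.exp 0 from Real.exp_zero.symm]
    exact Real.exp_lt_exp.mpr (by positivity)
  have hE3 : Real.exp (6 * α * ε) = E ^ 3 := by
    rw [hEdef, ← Real.exp_nat_mul]
    congr 1; push_cast; ring
  have ht0 : (0 : ℝ) < 2 ^ s := by positivity
  have ht1 : (1 : ℝ) ≤ 2 ^ s := by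
    calc (1 : ℝ) = 1 ^ s := (one_pow s).symm
      _ ≤ 2 ^ s := pow_le_pow_left₀ (by norm_num) (by norm_num) s
  -- the key inequality from hm
  rw [mConst, div_lt_iff₀ hL, hE3] at hm
  set M := Real.cosh ε ^ m with hMdef
  have hM0 : 0 < M := by positivity
  have key : (2 : ℝ) ^ s * E * (1 + 2 ^ s * C * E ^ 3) < M := by
    have h2 := Real.exp_lt_exp.mpr hm
    rw [Real.exp_add, Real.exp_add] at h2
    rw [Real.exp_log (by positivity : (0 : ℝ) < 1 + 2 ^ s * C * E ^ 3)] at h2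
    rw [show Real.log 2 * (s : ℝ) = (s : ℝ) * Real.log 2 from mul_comm _ _,
      Real.exp_nat_mul, Real.exp_log (by norm_num : (0 : ℝ) < 2)] at h2
    rw [Real.exp_nat_mul, Real.exp_log hc0] at h2
    rw [hMdef, hEdef]
    exact h2
  set r := M⁻¹ with hrdef
  have hr0 : 0 < r := by positivity
  obtain ⟨hq_lt1, hmain⟩ := my_core hC ht1 hE1 hM0 key
  rw [← hrdef] at hq_lt1 hmain
  have hq0 : (0 : ℝ) ≤ 2 ^ s * E ^ 2 * r ^ 2 := by positivity
  have hmain : C * (2 ^ s * (2 : ℝ) ^ s * E ^ 4 * r ^ 2) / (1 - 2 ^ s * E ^ 2 * r ^ 2) < r := by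
    rw [show C * (2 ^ s * (2 : ℝ) ^ s * E ^ 4 * r ^ 2) = C * (2 ^ s * 2 ^ s * E ^ 4 * r ^ 2)
      from by ring]
    exact hmain
  clear hm key
  -- pointwise bound on the terms
  have hterm : ∀ n : ℕ,
      Real.exp (4 * α * ((n : ℝ) + 2) * ε) * (Real.cosh (2 * ((n : ℝ) + 1) * ε) ^ m)⁻¹ *
        f.eval (Real.tanh (2 * ((n : ℝ) + 2) * ε))
      ≤ (2 ^ s * (2 : ℝ) ^ s * E ^ 4 * r ^ 2 * F) * (2 ^ s * E ^ 2 * r ^ 2) ^ n := by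
    intro n
    have hexp : Real.exp (4 * α * ((n : ℝ) + 2) * ε) = E ^ (2 * (n + 2)) := by
      rw [show 4 * α * ((n : ℝ) + 2) * ε = ((2 * (n + 2) : ℕ) : ℝ) * (2 * α * ε) by
        push_cast; ring, Real.exp_nat_mul, hEdef]
    -- cosh bound
    have hcosh1 : Real.cosh ε ^ (2 * (n + 1)) ≤ Real.cosh (2 * ((n : ℝ) + 1) * ε) := by
      have h := my_cosh_pow_le hε.le (2 * (n + 1))
      rwa [show ((2 * (n + 1) : ℕ) : ℝ) * ε = 2 * ((n : ℝ) + 1) * ε by push_cast; ring] at h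
    have ha2 : (Real.cosh (2 * ((n : ℝ) + 1) * ε) ^ m)⁻¹ ≤ r ^ (2 * (n + 1)) := by
      have hstep : (Real.cosh ε ^ (2 * (n + 1))) ^ m ≤ Real.cosh (2 * ((n : ℝ) + 1) * ε) ^ m :=
        pow_le_pow_left₀ (by positivity) hcosh1 m
      have hre : r ^ (2 * (n + 1)) = ((Real.cosh ε ^ (2 * (n + 1))) ^ m)⁻¹ := by
        rw [hrdef, hMdef, ← inv_pow, ← pow_mul, ← pow_mul, Nat.mul_comm, inv_pow]
      rw [hre]
      exact inv_anti₀ (by positivity) hstep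
    -- tanh / eval bound
    have htanh2 : Real.tanh (2 * ((n : ℝ) + 2) * ε) ≤ ((2 * (n + 2) : ℕ) : ℝ) * Real.tanh ε := by
      have h := my_tanh_nat_mul hε.le (2 * (n + 2))
      rwa [show ((2 * (n + 2) : ℕ) : ℝ) * ε = 2 * ((n : ℝ) + 2) * ε by push_cast; ring] at h
    have htnn : 0 ≤ Real.tanh (2 * ((n : ℝ) + 2) * ε) := by
      rw [Real.tanh_eq_sinh_div_cosh]
      have hsn : 0 ≤ Real.sinh (2 * ((n : ℝ) + 2) * ε) :=
        Real.sinh_nonneg_iff.mpr (by positivity)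
      positivity
    have hK1 : (1 : ℝ) ≤ ((2 * (n + 2) : ℕ) : ℝ) := by push_cast; linarith [Nat.cast_nonneg (α := ℝ) n]
    have heval : f.eval (Real.tanh (2 * ((n : ℝ) + 2) * ε))
        ≤ ((2 * (n + 2) : ℕ) : ℝ) ^ s * F := by
      rw [hFdef]
      exact my_eval_le hcoeff hdeg hK1 htanh.le htnn htanh2
    have hKle : ((2 * (n + 2) : ℕ) : ℝ) ^ s ≤ (2 : ℝ) ^ (s * (n + 2)) := by
      have hnat : 2 * (n + 2) ≤ 2 ^ (n + 2) := by
        have := Nat.lt_two_pow_self (n := n + 1)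
        calc 2 * (n + 2) ≤ 2 * 2 ^ (n + 1) := by omega
          _ = 2 ^ (n + 2) := by ring
      have hcast : ((2 * (n + 2) : ℕ) : ℝ) ≤ (2 : ℝ) ^ (n + 2) := by
        exact_mod_cast Nat.cast_le.mpr hnat |>.trans_eq (by push_cast; ring)
      calc ((2 * (n + 2) : ℕ) : ℝ) ^ s ≤ ((2 : ℝ) ^ (n + 2)) ^ s :=
            pow_le_pow_left₀ (by positivity) hcast s
        _ = (2 : ℝ) ^ (s * (n + 2)) := by rw [← pow_mul, Nat.mul_comm]
    have heval2 : f.eval (Real.tanh (2 * ((n : ℝ) + 2) * ε)) ≤ (2 : ℝ) ^ (s * (n + 2)) * F :=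
      heval.trans (mul_le_mul_of_nonneg_right hKle hF.le)
    calc Real.exp (4 * α * ((n : ℝ) + 2) * ε) * (Real.cosh (2 * ((n : ℝ) + 1) * ε) ^ m)⁻¹ *
          f.eval (Real.tanh (2 * ((n : ℝ) + 2) * ε))
        ≤ E ^ (2 * (n + 2)) * r ^ (2 * (n + 1)) * ((2 : ℝ) ^ (s * (n + 2)) * F) := by
          rw [hexp]
          exact mul_le_mul (mul_le_mul_of_nonneg_left ha2 (by positivity)) heval2
            (hevalnn _ htnn) (by positivity)
      _ = (2 ^ s * (2 : ℝ) ^ s * E ^ 4 * r ^ 2 * F) * (2 ^ s * E ^ 2 * r ^ 2) ^ n := by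
          rw [show 2 * (n + 2) = 2 * n + 4 by ring, show 2 * (n + 1) = 2 * n + 2 by ring,
            show s * (n + 2) = s * n + 2 * s by ring, pow_add, pow_add, pow_add,
            pow_mul, pow_mul, pow_mul, mul_pow, mul_pow]
          ring
  have htermnn : ∀ n : ℕ, 0 ≤
      Real.exp (4 * α * ((n : ℝ) + 2) * ε) * (Real.cosh (2 * ((n : ℝ) + 1) * ε) ^ m)⁻¹ *
        f.eval (Real.tanh (2 * ((n : ℝ) + 2) * ε)) := by
    intro n
    have htnn : 0 ≤ Real.tanh (2 * ((n : ℝ) + 2) * ε) := by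
      rw [Real.tanh_eq_sinh_div_cosh]
      have : 0 ≤ Real.sinh (2 * ((n : ℝ) + 2) * ε) := Real.sinh_nonneg_iff.mpr (by positivity)
      positivity
    have := hevalnn _ htnn
    positivity
  have hgsum : Summable (fun n : ℕ =>
      (2 ^ s * (2 : ℝ) ^ s * E ^ 4 * r ^ 2 * F) * (2 ^ s * E ^ 2 * r ^ 2) ^ n) :=
    (summable_geometric_of_lt_one hq0 hq_lt1).mul_left _
  have hsummable : Summable (fun n : ℕ =>
      Real.exp (4 * α * ((n : ℝ) + 2) * ε) * (Real.cosh (2 * ((n : ℝ) + 1) * ε) ^ m)⁻¹ *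
        f.eval (Real.tanh (2 * ((n : ℝ) + 2) * ε))) :=
    Summable.of_nonneg_of_le htermnn hterm hgsum
  refine ⟨hsummable, ?_⟩
  have htsum : ∑' n : ℕ,
      Real.exp (4 * α * ((n : ℝ) + 2) * ε) * (Real.cosh (2 * ((n : ℝ) + 1) * ε) ^ m)⁻¹ *
        f.eval (Real.tanh (2 * ((n : ℝ) + 2) * ε))
      ≤ (2 ^ s * (2 : ℝ) ^ s * E ^ 4 * r ^ 2 * F) * (1 - 2 ^ s * E ^ 2 * r ^ 2)⁻¹ := by
    calc _ ≤ ∑' n : ℕ, (2 ^ s * (2 : ℝ) ^ s * E ^ 4 * r ^ 2 * F) * (2 ^ s * E ^ 2 * r ^ 2) ^ n :=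
          Summable.tsum_le_tsum hterm hsummable hgsum
      _ = (2 ^ s * (2 : ℝ) ^ s * E ^ 4 * r ^ 2 * F) * ∑' n : ℕ, (2 ^ s * E ^ 2 * r ^ 2) ^ n :=
          tsum_mul_left
      _ = _ := by rw [tsum_geometric_of_lt_one hq0 hq_lt1]
  calc C * ∑' n : ℕ,
        Real.exp (4 * α * ((n : ℝ) + 2) * ε) * (Real.cosh (2 * ((n : ℝ) + 1) * ε) ^ m)⁻¹ *
          f.eval (Real.tanh (2 * ((n : ℝ) + 2) * ε))
      ≤ C * ((2 ^ s * (2 : ℝ) ^ s * E ^ 4 * r ^ 2 * F) * (1 - 2 ^ s * E ^ 2 * r ^ 2)⁻¹) :=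
        mul_le_mul_of_nonneg_left htsum hC.le
    _ = (C * (2 ^ s * (2 : ℝ) ^ s * E ^ 4 * r ^ 2) / (1 - 2 ^ s * E ^ 2 * r ^ 2)) * F := by
        ring
    _ < r * F := mul_lt_mul_of_pos_right hmain hF
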